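/- There exist for every c > 0 a matrix X ∈ M₂(ℂ) such that λ₂(|X|_qsym) > c · λ₂(|X|_sym), where λ₂ denotes the smallest eigenvalue. Explicitly, for X_θ := [[cos θ, 0],[sin θ, 0]] with θ ∈ (0, π/2), one has λ₂(|X_θ|_sym) = (1 − cos θ)/2 and λ₂(|X_θ|_qsym) = √((1 − cos θ)/2), so the ratio √(2/(1−cos θ)) tends to infinity as θ → 0⁺. -/

import Mathlib

open Matrix
open scoped ComplexOrder

/-- The square root of a positive semidefinite matrix (Mathlib's former definition). -/
noncomputable def Matrix.PosSemidef.sqrt {n 𝕜 : Type*} [Fintype n] [RCLike 𝕜] [DecidableEq n]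
    {A : Matrix n n 𝕜} (hA : A.PosSemidef) : Matrix n n 𝕜 :=
  (hA.1.eigenvectorUnitary : Matrix n n 𝕜) * diagonal ((↑) ∘ Real.sqrt ∘ hA.1.eigenvalues) *
  (star hA.1.eigenvectorUnitary : Matrix n n 𝕜)

lemma Matrix.PosSemidef.posSemidef_sqrt {n 𝕜 : Type*} [Fintype n] [RCLike 𝕜] [DecidableEq n]
    {A : Matrix n n 𝕜} (hA : A.PosSemidef) : hA.sqrt.PosSemidef := by
  have := (PosSemidef.diagonal (R := 𝕜) (d := ((↑) ∘ Real.sqrt ∘ hA.1.eigenvalues))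
    (fun i => by simp [Real.sqrt_nonneg])).mul_mul_conjTranspose_same
    (hA.1.eigenvectorUnitary : Matrix n n 𝕜)
  simpa [Matrix.PosSemidef.sqrt, Matrix.star_eq_conjTranspose] using this

/-- The usual modulus `|Z| = (Zᴴ Z)^(1/2)` (positive semidefinite square root). -/
noncomputable def mAbs {k : Type*} [Fintype k] [DecidableEq k]
    (Z : Matrix k k ℂ) : Matrix k k ℂ :=
  (Matrix.posSemidef_conjTranspose_mul_self Z).sqrt

lemma mAbs_posSemidef {k : Type*} [Fintype k] [DecidableEq k]
    (Z : Matrix k k ℂ) : (mAbs Z).PosSemidef :=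
  Matrix.PosSemidef.posSemidef_sqrt _

lemma psd_half_smul {k : Type*} [Fintype k] [DecidableEq k]
    {M : Matrix k k ℂ} (h : M.PosSemidef) :
    ((2:ℂ)⁻¹ • M).PosSemidef := by
  constructor
  · unfold Matrix.IsHermitian
    rw [conjTranspose_smul, h.1]
    norm_num
  · intro x
    convert smul_nonneg (by simp : (0:ℂ) ≤ (2:ℂ)⁻¹) (h.2 x) using 1
    simp only [smul_eq_mul, Finsupp.mul_sum, Matrix.smul_apply]
    exact Finsupp.sum_congr fun i _ => Finsupp.sum_congr fun j _ => by ring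

/-- The arithmetic symmetric modulus `(|Z| + |Z*|)/2`. -/
noncomputable def symMod {k : Type*} [Fintype k] [DecidableEq k]
    (Z : Matrix k k ℂ) : Matrix k k ℂ :=
  (2:ℂ)⁻¹ • (mAbs Z + mAbs Zᴴ)

lemma symMod_posSemidef {k : Type*} [Fintype k] [DecidableEq k]
    (Z : Matrix k k ℂ) : (symMod Z).PosSemidef :=
  psd_half_smul ((mAbs_posSemidef Z).add (mAbs_posSemidef Zᴴ))

lemma qsym_arg_psd {k : Type*} [Fintype k] [DecidableEq k]
    (Z : Matrix k k ℂ) :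
    ((2:ℂ)⁻¹ • (mAbs Z ^ 2 + mAbs Zᴴ ^ 2)).PosSemidef :=
  psd_half_smul (((mAbs_posSemidef Z).pow 2).add ((mAbs_posSemidef Zᴴ).pow 2))

/-- The quadratic symmetric modulus `((|Z|² + |Z*|²)/2)^(1/2)`. -/
noncomputable def qsymMod {k : Type*} [Fintype k] [DecidableEq k]
    (Z : Matrix k k ℂ) : Matrix k k ℂ :=
  (qsym_arg_psd Z).sqrt

lemma qsymMod_posSemidef {k : Type*} [Fintype k] [DecidableEq k]
    (Z : Matrix k k ℂ) : (qsymMod Z).PosSemidef :=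
  Matrix.PosSemidef.posSemidef_sqrt _

/-- The Schatten `p`-norm, as the `ℓ^p` norm of the singular values
(the eigenvalues of `|X|`). -/
noncomputable def schatten {k : Type*} [Fintype k] [DecidableEq k]
    (p : ℝ) (X : Matrix k k ℂ) : ℝ :=
  (∑ i, ((mAbs_posSemidef X).1.eigenvalues i) ^ p) ^ (1/p)

/-- The operator norm: the largest singular value. -/
noncomputable def opN {k : Type*} [Fintype k] [DecidableEq k]
    (X : Matrix k k ℂ) : ℝ :=
  ⨆ i, (mAbs_posSemidef X).1.eigenvalues i

/-- The Frobenius (Schatten-2) norm. -/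
noncomputable def frob {k : Type*} [Fintype k] [DecidableEq k]
    (X : Matrix k k ℂ) : ℝ :=
  Real.sqrt ((Xᴴ * X).trace.re)

/-- Smallest eigenvalue of the arithmetic symmetric modulus. -/
noncomputable def minEigSym {k : Type*} [Fintype k] [DecidableEq k]
    (Z : Matrix k k ℂ) : ℝ :=
  ⨅ i, (symMod_posSemidef Z).1.eigenvalues i

/-- Smallest eigenvalue of the quadratic symmetric modulus. -/
noncomputable def minEigQsym {k : Type*} [Fintype k] [DecidableEq k]
    (Z : Matrix k k ℂ) : ℝ :=
  ⨅ i, (qsymMod_posSemidef Z).1.eigenvalues i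

section Helpers

section SqrtUnique
open scoped MatrixOrder

theorem Matrix.PosSemidef.eq_sqrt_of_sq_eq {n : Type*} [Fintype n] [DecidableEq n]
    {B : Matrix n n ℂ} (hB : B.PosSemidef) {A : Matrix n n ℂ} (hA : A.PosSemidef)
    (h : B ^ 2 = A) : B = hA.sqrt := by
  have h1 : hA.sqrt = CFC.sqrt A := by
    rw [CFC.sqrt_eq_cfc, cfc_nnreal_eq_real _ A, hA.1.cfc_eq]
    simp only [IsHermitian.cfc, Unitary.conjStarAlgAut_apply, Matrix.PosSemidef.sqrt]
    congr 3
    funext i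
    simp [max_eq_left (hA.eigenvalues_nonneg i)]
  rw [h1]
  exact (CFC.sqrt_unique (by rw [← sq]; exact h) hB.nonneg).symm

end SqrtUnique

lemma trace_eq_sum_eig {n : Type*} [Fintype n] [DecidableEq n]
    {A : Matrix n n ℂ} (hA : A.IsHermitian) :
    A.trace = ∑ i, (hA.eigenvalues i : ℂ) := by
  conv_lhs => rw [hA.spectral_theorem, Unitary.conjStarAlgAut_apply]
  rw [Matrix.trace_mul_cycle,
    (Matrix.mem_unitaryGroup_iff').mp (hA.eigenvectorUnitary).2, one_mul]
  simp [Matrix.trace_diagonal]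

lemma psd_real_smul {k : Type*} [Fintype k] [DecidableEq k]
    {r : ℝ} (hr : 0 ≤ r) {M : Matrix k k ℂ} (h : M.PosSemidef) :
    ((r:ℂ) • M).PosSemidef := by
  constructor
  · unfold Matrix.IsHermitian
    rw [conjTranspose_smul, h.1]
    simp [Complex.star_def, Complex.conj_ofReal]
  · intro x
    convert smul_nonneg (Complex.zero_le_real.mpr hr) (h.2 x) using 1
    simp only [smul_eq_mul, Finsupp.mul_sum, Matrix.smul_apply]
    exact Finsupp.sum_congr fun i _ => Finsupp.sum_congr fun j _ => by ring

lemma min_eig_fin_two {A : Matrix (Fin 2) (Fin 2) ℂ} (hA : A.PosSemidef)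
    {u v : ℝ} (hu : 0 ≤ u) (huv : u < v)
    (hT : A.trace = ((u + v : ℝ) : ℂ)) (hD : A.det = ((u * v : ℝ) : ℂ)) :
    (⨅ i, hA.1.eigenvalues i) = u := by
  have hsum : hA.1.eigenvalues 0 + hA.1.eigenvalues 1 = u + v := by
    have h := trace_eq_sum_eig hA.1
    rw [hT, Fin.sum_univ_two] at h
    exact Complex.ofReal_inj.mp (by push_cast at h ⊢; exact h.symm)
  have hprod : hA.1.eigenvalues 0 * hA.1.eigenvalues 1 = u * v := by
    have h := hA.1.det_eq_prod_eigenvalues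
    rw [hD, Fin.prod_univ_two] at h
    exact Complex.ofReal_inj.mp (by push_cast at h ⊢; exact h.symm)
  set a := hA.1.eigenvalues 0 with ha
  set b := hA.1.eigenvalues 1 with hb
  have hcase : (a = u ∧ b = v) ∨ (a = v ∧ b = u) := by
    have h0 : (a - u) * (a - v) = 0 := by linear_combination a * hsum - hprod
    rcases mul_eq_zero.mp h0 with h | h
    · exact Or.inl ⟨by linarith [sub_eq_zero.mp h], by have := sub_eq_zero.mp h; linarith⟩
    · exact Or.inr ⟨by linarith [sub_eq_zero.mp h], by have := sub_eq_zero.mp h; linarith⟩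
  have hbdd : BddBelow (Set.range fun i => hA.1.eigenvalues i) :=
    (Set.finite_range _).bddBelow
  apply le_antisymm
  · rcases hcase with ⟨h1, _⟩ | ⟨_, h2⟩
    · exact h1 ▸ ciInf_le hbdd 0
    · exact h2 ▸ ciInf_le hbdd 1
  · refine le_ciInf fun i => ?_
    have hi : hA.1.eigenvalues i = a ∨ hA.1.eigenvalues i = b := by
      fin_cases i
      · exact Or.inl rfl
      · exact Or.inr rfl
    rcases hi with h | h <;> rcases hcase with ⟨h1, h2⟩ | ⟨h1, h2⟩ <;> rw [h] <;>
      simp [h1, h2, le_of_lt huv]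

set_option maxHeartbeats 1600000 in
lemma key18 (θ : ℝ) (hθ : θ ∈ Set.Ioo 0 (Real.pi / 2)) :
    minEigSym (!![((Real.cos θ : ℝ) : ℂ), 0; ((Real.sin θ : ℝ) : ℂ), 0]) =
        (1 - Real.cos θ) / 2 ∧
      minEigQsym (!![((Real.cos θ : ℝ) : ℂ), 0; ((Real.sin θ : ℝ) : ℂ), 0]) =
        Real.sqrt ((1 - Real.cos θ) / 2) := by
  obtain ⟨hθ0, hθ2⟩ := hθ
  set c := Real.cos θ with hcdef
  set s := Real.sin θ with hsdef
  have hcs : c ^ 2 + s ^ 2 = 1 := by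
    rw [hcdef, hsdef, add_comm]; exact Real.sin_sq_add_cos_sq θ
  have hc0 : 0 < c := Real.cos_pos_of_mem_Ioo ⟨by linarith [Real.pi_pos], hθ2⟩
  have hs0 : 0 < s := Real.sin_pos_of_pos_of_lt_pi hθ0 (by linarith [Real.pi_pos])
  have hc1 : c < 1 := by nlinarith
  have hcsC : (c:ℂ) ^ 2 + (s:ℂ) ^ 2 = 1 := by exact_mod_cast congrArg Complex.ofReal hcs
  set X := !![((c : ℝ) : ℂ), 0; ((s : ℝ) : ℂ), 0] with hXdef
  set E := !![(1:ℂ), 0; 0, 0] with hEdef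
  set P := !![((c:ℝ):ℂ)^2, (c:ℂ)*(s:ℂ); (c:ℂ)*(s:ℂ), ((s:ℝ):ℂ)^2] with hPdef
  have hXE : Xᴴ * X = E := by
    ext i j
    fin_cases i <;> fin_cases j <;>
      simp [hXdef, hEdef, Matrix.mul_apply, Fin.sum_univ_two, Matrix.conjTranspose_apply] <;>
      linear_combination hcsC
  have hXP : X * Xᴴ = P := by
    ext i j
    fin_cases i <;> fin_cases j <;>
      simp [hXdef, hPdef, Matrix.mul_apply, Fin.sum_univ_two, Matrix.conjTranspose_apply] <;>
      ring
  have hE_psd : E.PosSemidef := by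
    have h := Matrix.posSemidef_conjTranspose_mul_self E
    have hEE : Eᴴ * E = E := by
      ext i j
      fin_cases i <;> fin_cases j <;>
        simp [hEdef, Matrix.mul_apply, Fin.sum_univ_two, Matrix.conjTranspose_apply]
    rwa [hEE] at h
  have hP_psd : P.PosSemidef := by
    have h := Matrix.posSemidef_conjTranspose_mul_self Xᴴ
    rwa [Matrix.conjTranspose_conjTranspose, hXP] at h
  have hE2 : E * E = E := by
    ext i j
    fin_cases i <;> fin_cases j <;>
      simp [hEdef, Matrix.mul_apply, Fin.sum_univ_two]
  have hP2 : P * P = P := by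
    ext i j
    fin_cases i <;> fin_cases j <;>
      simp [hPdef, Matrix.mul_apply, Fin.sum_univ_two] <;>
      first
        | linear_combination ((c:ℂ)^2) * hcsC
        | linear_combination ((c:ℂ)*(s:ℂ)) * hcsC
        | linear_combination ((s:ℂ)^2) * hcsC
  have hAbsX : mAbs X = E := by
    unfold mAbs
    exact (hE_psd.eq_sqrt_of_sq_eq _ (by rw [sq, hE2, hXE])).symm
  have hAbsXH : mAbs Xᴴ = P := by
    unfold mAbs
    refine (hP_psd.eq_sqrt_of_sq_eq _ ?_).symm
    rw [sq, hP2, Matrix.conjTranspose_conjTranspose, hXP]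
  set M := !![(1+((c:ℝ):ℂ)^2)/2, (c:ℂ)*(s:ℂ)/2; (c:ℂ)*(s:ℂ)/2, ((s:ℝ):ℂ)^2/2] with hMdef
  have hEPM : (2:ℂ)⁻¹ • (E + P) = M := by
    ext i j
    fin_cases i <;> fin_cases j <;>
      simp [hEdef, hPdef, hMdef, Matrix.smul_apply, Matrix.add_apply] <;> ring
  have hM : symMod X = M := by
    unfold symMod; rw [hAbsX, hAbsXH, hEPM]
  have hM_psd : M.PosSemidef := hM ▸ symMod_posSemidef X
  have htrM : M.trace = 1 := by
    rw [hMdef, Matrix.trace_fin_two_of]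
    push_cast
    linear_combination (1/2 : ℂ) * hcsC
  constructor
  · -- sym part
    have hT : (symMod X).trace = (((1-c)/2 + ((1+c)/2) : ℝ) : ℂ) := by
      rw [hM, htrM]; push_cast; ring
    have hD : (symMod X).det = (((1-c)/2 * ((1+c)/2) : ℝ) : ℂ) := by
      rw [hM, hMdef, Matrix.det_fin_two_of]
      push_cast
      linear_combination ((1/4) : ℂ) * hcsC
    exact min_eig_fin_two (symMod_posSemidef X) (by linarith) (by linarith) hT hD
  · -- qsym part
    set u := Real.sqrt ((1-c)/2) with hudef
    set v := Real.sqrt ((1+c)/2) with hvdef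
    have hu2 : u^2 = (1-c)/2 := Real.sq_sqrt (by linarith)
    have hv2 : v^2 = (1+c)/2 := Real.sq_sqrt (by linarith)
    have hu0 : 0 ≤ u := Real.sqrt_nonneg _
    have hv0 : 0 ≤ v := Real.sqrt_nonneg _
    have huv : u < v := Real.sqrt_lt_sqrt (by linarith) (by linarith)
    have huvprod : u * v = s / 2 := by
      rw [hudef, hvdef, ← Real.sqrt_mul (by linarith)]
      rw [show (1-c)/2 * ((1+c)/2) = (s/2)^2 by nlinarith]
      exact Real.sqrt_sq (by linarith)
    have husum : u + v = Real.sqrt (1+s) := by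
      rw [show (1:ℝ)+s = (u+v)^2 by nlinarith [hu2, hv2, huvprod]]
      exact (Real.sqrt_sq (by linarith)).symm
    set r := (Real.sqrt (1+s))⁻¹ with hrdef
    have hsq : Real.sqrt (1+s)^2 = 1+s := Real.sq_sqrt (by linarith)
    have hsqpos : 0 < Real.sqrt (1+s) := Real.sqrt_pos.mpr (by linarith)
    have hr2 : r^2 * (1+s) = 1 := by
      rw [hrdef, inv_pow, hsq]
      field_simp
    have hr2C : (r:ℂ)^2 * (1+(s:ℂ)) = 1 := by exact_mod_cast congrArg Complex.ofReal hr2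
    have hrsum : r * (1+s) = u + v := by
      rw [husum, hrdef, inv_mul_eq_div, Real.div_sqrt]
    set N := M + (((s/2 : ℝ)):ℂ) • (1 : Matrix (Fin 2) (Fin 2) ℂ) with hNdef
    have hN2 : N * N = ((1+s : ℝ):ℂ) • M := by
      ext i j
      fin_cases i <;> fin_cases j <;>
        simp [hNdef, hMdef, Matrix.mul_apply, Fin.sum_univ_two, Matrix.add_apply,
          Matrix.smul_apply, Matrix.one_apply] <;>
        push_cast <;>
        first
          | linear_combination ((1+(c:ℂ)^2)/4) * hcsC
          | linear_combination ((c:ℂ)*(s:ℂ)/4) * hcsC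
          | linear_combination ((s:ℂ)^2/4) * hcsC
          | linear_combination (-(1+(c:ℂ)^2)/4) * hcsC
          | linear_combination (-(c:ℂ)*(s:ℂ)/4) * hcsC
          | linear_combination (-(s:ℂ)^2/4) * hcsC
    set Q := (r:ℂ) • N with hQdef
    have hQ_psd : Q.PosSemidef := by
      apply psd_real_smul (by positivity)
      exact hM_psd.add (psd_real_smul (by linarith) (Matrix.PosSemidef.one))
    have hQ2 : Q * Q = M := by
      rw [hQdef, Matrix.smul_mul, Matrix.mul_smul, hN2, smul_smul, smul_smul]
      rw [show (r:ℂ) * (r:ℂ) * ((1+s:ℝ):ℂ) = 1 by push_cast; linear_combination hr2C]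
      exact one_smul _ _
    have harg : (2:ℂ)⁻¹ • (mAbs X ^ 2 + mAbs Xᴴ ^ 2) = M := by
      rw [hAbsX, hAbsXH, sq, sq, hE2, hP2, hEPM]
    have hQsqrt : qsymMod X = Q := by
      unfold qsymMod
      refine (hQ_psd.eq_sqrt_of_sq_eq _ ?_).symm
      rw [sq, hQ2, harg]
    have hT : (qsymMod X).trace = ((u + v : ℝ) : ℂ) := by
      rw [hQsqrt, hQdef, Matrix.trace_smul, hNdef, Matrix.trace_add, Matrix.trace_smul,
        Matrix.trace_one, htrM, ← hrsum]
      push_cast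
      simp [smul_eq_mul]
    have hNexp : N = !![(1+(c:ℂ)^2)/2 + (s:ℂ)/2, (c:ℂ)*(s:ℂ)/2;
        (c:ℂ)*(s:ℂ)/2, (s:ℂ)^2/2 + (s:ℂ)/2] := by
      ext i j
      fin_cases i <;> fin_cases j <;>
        simp [hNdef, hMdef, Matrix.add_apply, Matrix.smul_apply, Matrix.one_apply] <;>
        push_cast <;> ring
    have hD : (qsymMod X).det = ((u * v : ℝ) : ℂ) := by
      rw [hQsqrt, hQdef, Matrix.det_smul, hNexp, Matrix.det_fin_two_of, huvprod]
      push_cast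
      simp [Fintype.card_fin]
      linear_combination ((r:ℂ)^2*(s:ℂ)/4) * hcsC + ((s:ℂ)/2) * hr2C
    exact min_eig_fin_two (qsymMod_posSemidef X) hu0 huv hT hD

end Helpers

/-- No universal constant `c` satisfies `λ₂(|X|_qsym) ≤ c·λ₂(|X|_sym)` for all
`X ∈ M₂`: for `X_θ = [[cos θ, 0], [sin θ, 0]]` with `θ ∈ (0, π/2)` one has
`λ₂(|X_θ|_sym) = (1−cos θ)/2` and `λ₂(|X_θ|_qsym) = √((1−cos θ)/2)`. -/
theorem stmt18 :
    (∀ c : ℝ, 0 < c → ∃ X : Matrix (Fin 2) (Fin 2) ℂ,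
      c * minEigSym X < minEigQsym X) ∧
    (∀ θ : ℝ, θ ∈ Set.Ioo 0 (Real.pi / 2) →
      minEigSym (!![((Real.cos θ : ℝ) : ℂ), 0; ((Real.sin θ : ℝ) : ℂ), 0]) =
        (1 - Real.cos θ) / 2 ∧
      minEigQsym (!![((Real.cos θ : ℝ) : ℂ), 0; ((Real.sin θ : ℝ) : ℂ), 0]) =
        Real.sqrt ((1 - Real.cos θ) / 2)) := by
  constructor
  · intro c0 hc0
    set θ := min 1 c0⁻¹ with hθdef
    have hθ0 : 0 < θ := lt_min one_pos (inv_pos.mpr hc0)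
    have hθ1 : θ ≤ 1 := min_le_left _ _
    have hθinv : θ ≤ c0⁻¹ := min_le_right _ _
    have hθ2 : θ < Real.pi / 2 := lt_of_le_of_lt hθ1 (by linarith [Real.pi_gt_three])
    obtain ⟨h1, h2⟩ := key18 θ ⟨hθ0, hθ2⟩
    refine ⟨!![((Real.cos θ : ℝ) : ℂ), 0; ((Real.sin θ : ℝ) : ℂ), 0], ?_⟩
    rw [h1, h2]
    set t := (1 - Real.cos θ) / 2 with htdef
    have ht0 : 0 < t := by
      have hs := Real.sin_pos_of_pos_of_lt_pi hθ0 (by linarith [Real.pi_pos])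
      have hcos1 : Real.cos θ < 1 := by
        nlinarith [Real.sin_sq_add_cos_sq θ, Real.neg_one_le_cos θ]
      rw [htdef]; linarith
    have htle : t ≤ θ ^ 2 / 4 := by
      have := Real.one_sub_sq_div_two_le_cos (x := θ)
      rw [htdef]; linarith
    have h4 : t ≤ (1 / (2 * c0)) ^ 2 := by
      have hθc : θ ^ 2 ≤ (c0⁻¹) ^ 2 := by nlinarith
      have : (1 / (2 * c0)) ^ 2 = (c0⁻¹) ^ 2 / 4 := by
        field_simp; ring
      rw [this]; linarith
    have hst : Real.sqrt t ≤ 1 / (2 * c0) := by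
      calc Real.sqrt t ≤ Real.sqrt ((1 / (2 * c0)) ^ 2) := Real.sqrt_le_sqrt h4
        _ = 1 / (2 * c0) := Real.sqrt_sq (by positivity)
    have h5 : c0 * Real.sqrt t ≤ 1 / 2 := by
      have := mul_le_mul_of_nonneg_left hst hc0.le
      have he : c0 * (1 / (2 * c0)) = 1 / 2 := by field_simp
      linarith
    have hsp : 0 < Real.sqrt t := Real.sqrt_pos.mpr ht0
    calc c0 * t = (c0 * Real.sqrt t) * Real.sqrt t := by
          rw [mul_assoc, Real.mul_self_sqrt ht0.le]
      _ ≤ (1 / 2) * Real.sqrt t := mul_le_mul_of_nonneg_right h5 (Real.sqrt_nonneg _)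
      _ < Real.sqrt t := by linarith
  · intro θ hθ
    exact key18 θ hθ
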